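/- If G is a 5-regular finite simple graph on 2n vertices in which every edge lies in a triangle, then G contains at least n edges each of which lies in at least two triangles. -/

import Mathlib

open Finset

/-- The sum over `A` of the number of neighbours inside `A` is even. -/
lemma aux_even_sum {V : Type*} [Fintype V] [DecidableEq V] (G : SimpleGraph V)
    [DecidableRel G.Adj] (A : Finset V) :
    Even (∑ u ∈ A, (A.filter (G.Adj u)).card) := by
  classical
  let H : SimpleGraph V :=
    { Adj := fun u w => u ∈ A ∧ w ∈ A ∧ G.Adj u w
      symm := ⟨by rintro u w ⟨hu, hw, h⟩; exact ⟨hw, hu, h.symm⟩⟩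
      loopless := ⟨by rintro u ⟨_, _, h⟩; exact G.ne_of_adj h rfl⟩ }
  haveI : DecidableRel H.Adj := fun u w => by
    unfold H; simp only; infer_instance
  have hsum : ∑ v, H.degree v = 2 * H.edgeFinset.card :=
    H.sum_degrees_eq_twice_card_edges
  have hdeg : ∀ u, H.degree u = if u ∈ A then (A.filter (G.Adj u)).card else 0 := by
    intro u
    by_cases hu : u ∈ A
    · rw [if_pos hu, SimpleGraph.degree]
      congr 1
      ext w
      rw [SimpleGraph.mem_neighborFinset, Finset.mem_filter]
      show (u ∈ A ∧ w ∈ A ∧ G.Adj u w) ↔ _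
      tauto
    · rw [if_neg hu, SimpleGraph.degree, Finset.card_eq_zero]
      ext w
      rw [SimpleGraph.mem_neighborFinset]
      show (u ∈ A ∧ w ∈ A ∧ G.Adj u w) ↔ _
      constructor
      · rintro ⟨h, _, _⟩; exact absurd h hu
      · intro h; exact absurd h (Finset.notMem_empty w)
  have : ∑ u ∈ A, (A.filter (G.Adj u)).card = ∑ v, H.degree v := by
    rw [← Finset.sum_subset (Finset.subset_univ A)
      (fun x _ hx => by rw [hdeg x, if_neg hx])]
    exact Finset.sum_congr rfl (fun u hu => by rw [hdeg u, if_pos hu])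
  rw [this, hsum]
  exact ⟨H.edgeFinset.card, two_mul _⟩

/-- Every vertex has an incident edge whose endpoints have at least two common
neighbours. -/
lemma aux_good_edge {V : Type*} [Fintype V] [DecidableEq V] (G : SimpleGraph V)
    [DecidableRel G.Adj] (hreg : G.IsRegularOfDegree 5)
    (htri : ∀ u v : V, G.Adj u v → ∃ w : V, G.Adj u w ∧ G.Adj v w) (v : V) :
    ∃ u : V, G.Adj v u ∧
      2 ≤ ((G.neighborFinset v).filter (G.Adj u)).card := by
  classical
  set A := G.neighborFinset v with hA
  have hAcard : A.card = 5 := hreg v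
  by_contra hcon
  push_neg at hcon
  have h1 : ∀ u ∈ A, ((A.filter (G.Adj u)).card) = 1 := by
    intro u hu
    have hadj : G.Adj v u := (SimpleGraph.mem_neighborFinset G v u).1 hu
    have hle : (A.filter (G.Adj u)).card < 2 := hcon u hadj
    have hge : 1 ≤ (A.filter (G.Adj u)).card := by
      obtain ⟨w, hvw, huw⟩ := htri v u hadj
      exact Finset.card_pos.2 ⟨w, Finset.mem_filter.2 ⟨(SimpleGraph.mem_neighborFinset G v w).2 hvw, huw⟩⟩
    omega
  have hsum : ∑ u ∈ A, (A.filter (G.Adj u)).card = 5 := by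
    rw [Finset.sum_congr rfl h1, Finset.sum_const, smul_eq_mul, hAcard, mul_one]
  have heven := aux_even_sum G A
  rw [hsum] at heven
  rw [Nat.even_iff] at heven
  omega

/-- A 5-regular graph on `2n` vertices with every edge in a triangle has at
least `n` edges each lying in at least two triangles. -/
theorem stmt_9 {V : Type*} [Fintype V] [DecidableEq V] (G : SimpleGraph V)
    [DecidableRel G.Adj] (n : ℕ) (hcard : Fintype.card V = 2 * n)
    (hreg : G.IsRegularOfDegree 5)
    (htri : ∀ u v : V, G.Adj u v → ∃ w : V, G.Adj u w ∧ G.Adj v w) :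
    n ≤ (G.edgeFinset.filter
        (fun e => 2 ≤ (Finset.univ.filter (fun w => ∀ x ∈ e, G.Adj x w)).card)).card := by
  classical
  set T := G.edgeFinset.filter
      (fun e => 2 ≤ (Finset.univ.filter (fun w => ∀ x ∈ e, G.Adj x w)).card) with hT
  have hcover : ∀ v : V, ∃ e ∈ T, v ∈ e := by
    intro v
    obtain ⟨u, hadj, hcount⟩ := aux_good_edge G hreg htri v
    refine ⟨s(v, u), ?_, ?_⟩
    · rw [hT, Finset.mem_filter]
      refine ⟨SimpleGraph.mem_edgeFinset.2 hadj, ?_⟩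
      have : (Finset.univ.filter (fun w => ∀ x ∈ (s(v,u) : Sym2 V), G.Adj x w))
          = (G.neighborFinset v).filter (G.Adj u) := by
        ext w
        simp only [Finset.mem_filter, Finset.mem_univ, true_and,
          SimpleGraph.mem_neighborFinset]
        constructor
        · intro h
          exact ⟨h v (Sym2.mem_mk_left v u), h u (Sym2.mem_mk_right v u)⟩
        · rintro ⟨h1, h2⟩ x hx
          rcases Sym2.mem_iff.1 hx with rfl | rfl
          · exact h1
          · exact h2
      rw [this]; exact hcount
    · exact Sym2.mem_mk_left v u
  have hsub : (Finset.univ : Finset V) ⊆ T.biUnion (fun e => Finset.univ.filter (· ∈ e)) := by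
    intro v _
    obtain ⟨e, he, hv⟩ := hcover v
    exact Finset.mem_biUnion.2 ⟨e, he, Finset.mem_filter.2 ⟨Finset.mem_univ v, hv⟩⟩
  have hbound : ∀ e ∈ T, (Finset.univ.filter (· ∈ e)).card ≤ 2 := by
    intro e _
    induction e with
    | _ a b =>
      calc (Finset.univ.filter (· ∈ (s(a,b) : Sym2 V))).card
          ≤ ({a, b} : Finset V).card := by
            apply Finset.card_le_card
            intro x hx
            have := (Finset.mem_filter.1 hx).2
            rw [Sym2.mem_iff] at this
            simp [Finset.mem_insert, this]
        _ ≤ 2 := Finset.card_insert_le _ _ |>.trans (by simp)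
  have h2n : 2 * n ≤ 2 * T.card := by
    calc 2 * n = Fintype.card V := hcard.symm
      _ = (Finset.univ : Finset V).card := rfl
      _ ≤ (T.biUnion (fun e => Finset.univ.filter (· ∈ e))).card := Finset.card_le_card hsub
      _ ≤ ∑ e ∈ T, (Finset.univ.filter (· ∈ e)).card := Finset.card_biUnion_le
      _ ≤ ∑ _e ∈ T, 2 := Finset.sum_le_sum hbound
      _ = 2 * T.card := by rw [Finset.sum_const, smul_eq_mul, mul_comm]
  omega
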